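/- Let A be an expanding 2×2 integer matrix with characteristic polynomial x² + px + q (q ≠ 0), v with {v, Av} linearly independent, k a nonzero integer, and 𝒟 = {0, v, kAv}. Define β_i by A^{−i}v = α_i v + β_i Av and set β̃ = ∑_{i≥1}|β_i|. If any point of T − T is written as ∑_{i=1}^{∞} A^{−i}(k_i Av + l_i v) = L v + K Av with k_i Av + l_i v ∈ 𝒟 − 𝒟, then K = ∑_{i=1}^{∞} (k_{i+1} + l_i) β_i and L = k_1 + ∑_{i=1}^{∞} (k_{i+1} + l_i) α_i; in particular |K| ≤ (1 + |k|)·β̃. -/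

import Mathlib

open Matrix Polynomial

/-- `A` has integer entries. -/
def IsIntMat (A : Matrix (Fin 2) (Fin 2) ℝ) : Prop :=
  ∀ i j, ∃ m : ℤ, A i j = (m : ℝ)

/-- All (complex) eigenvalues of `A` have modulus strictly larger than `1`. -/
def IsExpandingMat (A : Matrix (Fin 2) (Fin 2) ℝ) : Prop :=
  ∀ μ ∈ spectrum ℂ (A.map (algebraMap ℝ ℂ)), 1 < ‖μ‖

/-- Auxiliary rearrangement lemma. -/
lemma stmt12_aux (w : ℕ → ℝ) (hw : Summable fun i : ℕ => |w (i + 1)|)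
    (ks ls : ℕ → ℤ) (B : ℝ) (hks : ∀ i, |(ks i : ℝ)| ≤ B) (hls : ∀ i, |(ls i : ℝ)| ≤ 1)
    (S : ℝ)
    (h : HasSum (fun i : ℕ =>
      (if i = 0 then (0 : ℝ) else (ks i : ℝ)) * w i + (ls i : ℝ) * w (i + 1)) S) :
    HasSum (fun i : ℕ => ((ks (i + 1) : ℝ) + (ls i : ℝ)) * w (i + 1)) S := by
  have hB : 0 ≤ B := le_trans (abs_nonneg _) (hks 0)
  set g : ℕ → ℝ := fun i => (ks (i + 1) : ℝ) * w (i + 1) with hg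
  set h' : ℕ → ℝ := fun i => (ls i : ℝ) * w (i + 1) with hh
  have hgsum : Summable g := by
    apply Summable.of_abs
    apply Summable.of_nonneg_of_le (fun i => abs_nonneg _) _ (hw.mul_left B)
    intro i
    rw [hg, abs_mul]
    exact mul_le_mul_of_nonneg_right (hks _) (abs_nonneg _)
  have hhsum : Summable h' := by
    apply Summable.of_abs
    apply Summable.of_nonneg_of_le (fun i => abs_nonneg _) _ hw
    intro i
    rw [hh, abs_mul]
    calc |(ls i : ℝ)| * |w (i + 1)| ≤ 1 * |w (i + 1)| :=
          mul_le_mul_of_nonneg_right (hls _) (abs_nonneg _)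
      _ = |w (i + 1)| := one_mul _
  set g' : ℕ → ℝ := fun i => if i = 0 then 0 else g (i - 1) with hg'
  have hg'sum : HasSum g' (∑' i, g i) := by
    have h1 : (fun n : ℕ => g' (n + 1)) = g := by
      funext n; simp [hg']
    have h2 := (hasSum_nat_add_iff (f := g') 1).mp (h1 ▸ hgsum.hasSum)
    simpa [hg'] using h2
  have hdecomp : (fun i : ℕ =>
      (if i = 0 then (0 : ℝ) else (ks i : ℝ)) * w i + (ls i : ℝ) * w (i + 1)) =
      fun i => g' i + h' i := by
    funext i
    cases i with
    | zero => simp [hg', hh]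
    | succ n => simp [hg', hh, hg]
  rw [hdecomp] at h
  have hgh : HasSum (fun i => g' i + h' i) (∑' i, g i + ∑' i, h' i) :=
    hg'sum.add hhsum.hasSum
  have hS : S = ∑' i, g i + ∑' i, h' i := h.unique hgh
  have : HasSum (fun i => g i + h' i) (∑' i, g i + ∑' i, h' i) :=
    hgsum.hasSum.add hhsum.hasSum
  rw [hS]
  convert this using 2 with i
  ring

theorem stmt12 (A : Matrix (Fin 2) (Fin 2) ℝ) (hint : IsIntMat A)
    (hexp : IsExpandingMat A) (p q : ℤ) (hq : q ≠ 0)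
    (hchar : A.charpoly = X ^ 2 + C (p : ℝ) * X + C (q : ℝ))
    (v : Fin 2 → ℝ) (hv : LinearIndependent ℝ ![v, A *ᵥ v])
    (k : ℤ) (hk : k ≠ 0)
    (α β : ℕ → ℝ)
    (hαβ : ∀ i, 1 ≤ i → A⁻¹ ^ i *ᵥ v = α i • v + β i • (A *ᵥ v))
    (hβsum : Summable fun i : ℕ => |β (i + 1)|)
    (ks ls : ℕ → ℤ)
    (hd : ∀ i, (ks i, ls i) ∈
      ({(0, 0), (0, 1), (0, -1), (k, -1), (-k, 1), (k, 0), (-k, 0)} : Set (ℤ × ℤ)))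
    (L K : ℝ)
    (hsum : HasSum
      (fun i : ℕ => A⁻¹ ^ (i + 1) *ᵥ ((ks i : ℝ) • (A *ᵥ v) + (ls i : ℝ) • v))
      (L • v + K • (A *ᵥ v))) :
    HasSum (fun i : ℕ => ((ks (i + 1) + ls i : ℤ) : ℝ) * β (i + 1)) K ∧
    HasSum (fun i : ℕ => ((ks (i + 1) + ls i : ℤ) : ℝ) * α (i + 1)) (L - (ks 0 : ℝ)) ∧
    |K| ≤ (1 + |(k : ℝ)|) * ∑' i : ℕ, |β (i + 1)| := by
  -- determinant
  have hdet : A.det = (q : ℝ) := by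
    rw [det_eq_sign_charpoly_coeff, hchar]
    simp
  have hdet0 : IsUnit A.det := by
    rw [hdet]; exact isUnit_iff_ne_zero.mpr (by exact_mod_cast hq)
  have hA1 : A⁻¹ * A = 1 := nonsing_inv_mul A hdet0
  have hA1' : A * A⁻¹ = 1 := mul_nonsing_inv A hdet0
  have hAv : ∀ i : ℕ, A⁻¹ ^ (i + 1) *ᵥ (A *ᵥ v) = A⁻¹ ^ i *ᵥ v := by
    intro i
    rw [mulVec_mulVec, pow_succ, mul_assoc, hA1, mul_one]
  -- basis
  have hcard : Fintype.card (Fin 2) = Module.finrank ℝ (Fin 2 → ℝ) := by simp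
  set b : Module.Basis (Fin 2) ℝ (Fin 2 → ℝ) := basisOfLinearIndependentOfCardEqFinrank hv hcard
    with hbdef
  have hb0 : b 0 = v := by
    rw [hbdef, coe_basisOfLinearIndependentOfCardEqFinrank]; rfl
  have hb1 : b 1 = A *ᵥ v := by
    rw [hbdef, coe_basisOfLinearIndependentOfCardEqFinrank]; rfl
  have hc0 : ∀ a c : ℝ, b.coord 0 (a • v + c • (A *ᵥ v)) = a := by
    intro a c
    rw [← hb1, ← hb0]
    simp [Module.Basis.coord_apply]
  have hc1 : ∀ a c : ℝ, b.coord 1 (a • v + c • (A *ᵥ v)) = c := by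
    intro a c
    rw [← hb1, ← hb0]
    simp [Module.Basis.coord_apply]
  -- coefficients of each summand
  set cα : ℕ → ℝ := fun i =>
    (if i = 0 then (ks 0 : ℝ) else 0) +
      ((if i = 0 then (0 : ℝ) else (ks i : ℝ)) * α i + (ls i : ℝ) * α (i + 1)) with hcα
  set cβ : ℕ → ℝ := fun i =>
    (if i = 0 then (0 : ℝ) else (ks i : ℝ)) * β i + (ls i : ℝ) * β (i + 1) with hcβ
  have hterm : ∀ i : ℕ, A⁻¹ ^ (i + 1) *ᵥ ((ks i : ℝ) • (A *ᵥ v) + (ls i : ℝ) • v)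
      = cα i • v + cβ i • (A *ᵥ v) := by
    intro i
    rw [mulVec_add, mulVec_smul, mulVec_smul, hAv i, hαβ (i + 1) (by omega)]
    cases i with
    | zero =>
        rw [pow_zero, one_mulVec]
        simp only [hcα, hcβ, reduceIte]
        module
    | succ n =>
        rw [hαβ (n + 1) (by omega)]
        simp only [hcα, hcβ, if_neg (Nat.succ_ne_zero n)]
        module
  have hsum' : HasSum (fun i : ℕ => cα i • v + cβ i • (A *ᵥ v)) (L • v + K • (A *ᵥ v)) := by
    rw [show (fun i : ℕ => cα i • v + cβ i • (A *ᵥ v)) =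
      (fun i : ℕ => A⁻¹ ^ (i + 1) *ᵥ ((ks i : ℝ) • (A *ᵥ v) + (ls i : ℝ) • v)) from
      funext fun i => (hterm i).symm]
    exact hsum
  have hLsum : HasSum cα L := by
    have h := hsum'.mapL (b.coord 0).toContinuousLinearMap
    simpa only [LinearMap.coe_toContinuousLinearMap', hc0] using h
  have hKsum : HasSum cβ K := by
    have h := hsum'.mapL (b.coord 1).toContinuousLinearMap
    simpa only [LinearMap.coe_toContinuousLinearMap', hc1] using h
  -- bounds on ks, ls
  have hksbd : ∀ i, |(ks i : ℝ)| ≤ |(k : ℝ)| := by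
    intro i
    have h := hd i
    simp only [Set.mem_insert_iff, Set.mem_singleton_iff, Prod.mk.injEq] at h
    have h1 : ks i = 0 ∨ ks i = k ∨ ks i = -k := by tauto
    rcases h1 with h1 | h1 | h1 <;> rw [h1] <;> push_cast <;> simp [abs_nonneg]
  have hlsbd : ∀ i, |(ls i : ℝ)| ≤ 1 := by
    intro i
    have h := hd i
    simp only [Set.mem_insert_iff, Set.mem_singleton_iff, Prod.mk.injEq] at h
    have h1 : ls i = 0 ∨ ls i = 1 ∨ ls i = -1 := by tauto
    rcases h1 with h1 | h1 | h1 <;> rw [h1] <;> push_cast <;> simp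
  -- β part
  have hβpart : HasSum (fun i : ℕ => ((ks (i + 1) : ℝ) + (ls i : ℝ)) * β (i + 1)) K :=
    stmt12_aux β hβsum ks ls _ hksbd hlsbd K hKsum
  -- relation between α and β
  have hβ1 : β 1 ≠ 0 := by
    intro h0
    rw [linearIndependent_fin2] at hv
    have h1 := hαβ 1 le_rfl
    rw [h0, pow_one] at h1
    have h2 : A *ᵥ (A⁻¹ *ᵥ v) = A *ᵥ (α 1 • v + (0 : ℝ) • (A *ᵥ v)) := by rw [h1]
    rw [mulVec_mulVec, hA1', one_mulVec, mulVec_add, mulVec_smul, mulVec_smul,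
      zero_smul, add_zero] at h2
    exact hv.2 (α 1) ((by simpa using h2.symm))
  have hrec : ∀ j : ℕ, 1 ≤ j → β (j + 1) = α j * β 1 := by
    intro j hj
    have h1 : A⁻¹ ^ (j + 1) *ᵥ v = A⁻¹ *ᵥ (A⁻¹ ^ j *ᵥ v) := by
      rw [mulVec_mulVec, ← pow_succ']
    rw [hαβ (j + 1) (by omega), hαβ j hj] at h1
    have h2 : A⁻¹ *ᵥ (α j • v + β j • (A *ᵥ v)) =
        α j • (A⁻¹ *ᵥ v) + β j • (A⁻¹ *ᵥ (A *ᵥ v)) := by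
      rw [mulVec_add, mulVec_smul, mulVec_smul]
    have h3 : A⁻¹ *ᵥ (A *ᵥ v) = v := by rw [mulVec_mulVec, hA1, one_mulVec]
    have h4 : A⁻¹ *ᵥ v = α 1 • v + β 1 • (A *ᵥ v) := by
      have := hαβ 1 le_rfl; rwa [pow_one] at this
    rw [h2, h3, h4] at h1
    have h5 : α (j + 1) • v + β (j + 1) • (A *ᵥ v) =
        (α j * α 1 + β j) • v + (α j * β 1) • (A *ᵥ v) := by
      rw [h1]; module
    have h6 := congrArg (b.coord 1) h5
    rw [hc1, hc1] at h6
    exact h6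
  have hαform : ∀ i : ℕ, α (i + 1) = β (i + 2) * (β 1)⁻¹ := by
    intro i
    rw [hrec (i + 1) (by omega)]
    field_simp
  have hαsum : Summable fun i : ℕ => |α (i + 1)| := by
    have h1 : Summable fun i : ℕ => |β (i + 1 + 1)| :=
      (summable_nat_add_iff (f := fun i : ℕ => |β (i + 1)|) 1).mpr hβsum
    have h2 : (fun i : ℕ => |α (i + 1)|) = fun i : ℕ => |β (i + 1 + 1)| * |(β 1)⁻¹| := by
      funext i
      rw [hαform i, abs_mul]
    rw [h2]
    exact h1.mul_right _
  -- α part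
  have he : HasSum (fun i : ℕ => if i = 0 then (ks 0 : ℝ) else 0) (ks 0 : ℝ) :=
    hasSum_ite_eq 0 _
  have hLsum' : HasSum (fun i : ℕ =>
      (if i = 0 then (0 : ℝ) else (ks i : ℝ)) * α i + (ls i : ℝ) * α (i + 1))
      (L - (ks 0 : ℝ)) := by
    have h := hLsum.sub he
    convert h using 2 with i <;> try rfl
    rw [hcα]
    ring
  have hαpart : HasSum (fun i : ℕ => ((ks (i + 1) : ℝ) + (ls i : ℝ)) * α (i + 1))
      (L - (ks 0 : ℝ)) :=
    stmt12_aux α hαsum ks ls _ hksbd hlsbd _ hLsum'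
  -- the bound
  have hfabs : ∀ i : ℕ, |((ks (i + 1) : ℝ) + (ls i : ℝ)) * β (i + 1)| ≤
      (1 + |(k : ℝ)|) * |β (i + 1)| := by
    intro i
    rw [abs_mul]
    apply mul_le_mul_of_nonneg_right _ (abs_nonneg _)
    calc |(ks (i + 1) : ℝ) + (ls i : ℝ)| ≤ |(ks (i + 1) : ℝ)| + |(ls i : ℝ)| := abs_add_le _ _
      _ ≤ |(k : ℝ)| + 1 := add_le_add (hksbd _) (hlsbd _)
      _ = 1 + |(k : ℝ)| := by ring
  have hfsummable : Summable fun i : ℕ => |((ks (i + 1) : ℝ) + (ls i : ℝ)) * β (i + 1)| :=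
    Summable.of_nonneg_of_le (fun i => abs_nonneg _) hfabs (hβsum.mul_left _)
  have hbound : |K| ≤ (1 + |(k : ℝ)|) * ∑' i : ℕ, |β (i + 1)| := by
    rw [← hβpart.tsum_eq]
    calc |∑' i : ℕ, ((ks (i + 1) : ℝ) + (ls i : ℝ)) * β (i + 1)|
        ≤ ∑' i : ℕ, |((ks (i + 1) : ℝ) + (ls i : ℝ)) * β (i + 1)| := by
          have h1 : Summable fun i : ℕ => ‖((ks (i + 1) : ℝ) + (ls i : ℝ)) * β (i + 1)‖ := by
            simpa only [Real.norm_eq_abs] using hfsummable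
          have h2 := norm_tsum_le_tsum_norm
            (f := fun i : ℕ => ((ks (i + 1) : ℝ) + (ls i : ℝ)) * β (i + 1)) h1
          simpa only [Real.norm_eq_abs] using h2
      _ ≤ ∑' i : ℕ, (1 + |(k : ℝ)|) * |β (i + 1)| :=
          Summable.tsum_le_tsum hfabs hfsummable (hβsum.mul_left _)
      _ = (1 + |(k : ℝ)|) * ∑' i : ℕ, |β (i + 1)| := tsum_mul_left
  refine ⟨?_, ?_, hbound⟩
  · convert hβpart using 2 with i
    push_cast
    ring
  · convert hαpart using 2 with i
    push_cast
    ring
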